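/- Let f : [0,∞) → ℝ be differentiable at x and let x > 0, 0 < α ≤ 1, β > 0. Then the truncated M-fractional derivative of f of order α at x exists and equals D_β^α f(x) = (x^{1-α} / Γ(β+1)) · f'(x), where Γ is the Gamma function. More precisely, the limit as ε → 0 of ( f( x · ∑_{k=0}^{i} (ε x^{-α})^k / Γ(βk+1) ) − f(x) ) / ε exists for each fixed truncation index i ≥ 1 and equals x^{1-α} f'(x) / Γ(β+1). -/

import Mathlib

open Real Filter Topology

/-- The truncated M-fractional derivative of a differentiable function exists
and equals `x^(1-α) * f'(x) / Γ(β+1)`: the limit as `ε → 0` of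
`( f( x · ∑_{k=0}^{i} (ε x^{-α})^k / Γ(βk+1) ) − f(x) ) / ε`
exists for each fixed truncation index `i ≥ 1` and equals that value. -/
theorem truncated_M_fractional_derivative
    (f : ℝ → ℝ) (x α β : ℝ) (i : ℕ)
    (hx : 0 < x) (hα0 : 0 < α) (hα1 : α ≤ 1) (hβ : 0 < β) (hi : 1 ≤ i)
    (hf : DifferentiableAt ℝ f x) :
    Tendsto
      (fun ε : ℝ =>
        (f (x * ∑ k ∈ Finset.range (i + 1),
            (ε * x ^ (-α)) ^ k / Real.Gamma (β * k + 1)) - f x) / ε)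
      (𝓝[≠] (0 : ℝ))
      (𝓝 (x ^ (1 - α) * deriv f x / Real.Gamma (β + 1))) := by
  set c : ℝ := x ^ (-α) with hc
  set g : ℝ → ℝ := fun ε => x * ∑ k ∈ Finset.range (i + 1),
      (ε * c) ^ k / Real.Gamma (β * k + 1) with hg
  -- derivative of each summand at 0
  have hterm : ∀ k ∈ Finset.range (i + 1),
      HasDerivAt (fun ε : ℝ => (ε * c) ^ k / Real.Gamma (β * k + 1))
        ((k * (0 * c) ^ (k - 1) * c) / Real.Gamma (β * k + 1)) 0 := by
    intro k _
    exact ((hasDerivAt_mul_const c).pow k).div_const _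
  have hS : HasDerivAt (fun ε : ℝ => ∑ k ∈ Finset.range (i + 1),
      (ε * c) ^ k / Real.Gamma (β * k + 1))
      (∑ k ∈ Finset.range (i + 1), (k * (0 * c) ^ (k - 1) * c) / Real.Gamma (β * k + 1)) 0 :=
    HasDerivAt.fun_sum hterm
  have hsum : (∑ k ∈ Finset.range (i + 1), (k * (0 * c) ^ (k - 1) * c) / Real.Gamma (β * k + 1))
      = c / Real.Gamma (β + 1) := by
    rw [Finset.sum_eq_single_of_mem 1 (Finset.mem_range.2 (by omega))]
    · norm_num
    · intro k hk hk1
      rcases Nat.eq_zero_or_pos k with h0 | hpos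
      · simp [h0]
      · have : k - 1 ≠ 0 := by omega
        simp [zero_pow this]
  have hg0 : g 0 = x := by
    have : (∑ k ∈ Finset.range (i + 1), ((0:ℝ) * c) ^ k / Real.Gamma (β * k + 1)) = 1 := by
      rw [Finset.sum_eq_single_of_mem 0 (Finset.mem_range.2 (by omega))]
      · norm_num
      · intro k hk hk0
        simp [zero_pow hk0]
    show x * _ = x
    rw [this, mul_one]
  have hgd : HasDerivAt g (x ^ (1 - α) / Real.Gamma (β + 1)) 0 := by
    have := (hS.const_mul x)
    rw [hsum] at this
    have hx1 : x ^ (1 - α) = x * c := by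
      rw [hc, sub_eq_add_neg, Real.rpow_add hx, Real.rpow_one]
    rw [hx1, mul_div_assoc]
    exact this
  have hfd : HasDerivAt f (deriv f x) (g 0) := by
    rw [hg0]; exact hf.hasDerivAt
  have hcomp : HasDerivAt (f ∘ g) (deriv f x * (x ^ (1 - α) / Real.Gamma (β + 1))) 0 :=
    hfd.comp 0 hgd
  have := hasDerivAt_iff_tendsto_slope.mp hcomp
  have heq : ∀ ε : ℝ, slope (f ∘ g) 0 ε =
      (f (x * ∑ k ∈ Finset.range (i + 1),
        (ε * c) ^ k / Real.Gamma (β * k + 1)) - f x) / ε := by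
    intro ε
    rw [slope_def_field, Function.comp_apply, Function.comp_apply, hg0, sub_zero]
  have hval : deriv f x * (x ^ (1 - α) / Real.Gamma (β + 1))
      = x ^ (1 - α) * deriv f x / Real.Gamma (β + 1) := by ring
  rw [← hval]
  exact this.congr heq
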